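/- Let k ≥ 2 be an integer and q ∈ (0,1), and define λ̃(x) := q·k·∫₀ˣ λ_q(t)dt. Then for every x ∈ [0,1]: 1 - ( 1 - ( q/(1-(1-q)·λ̃(x)) )²·λ_q(x) )^{k-1} = x. That is, the degree distribution pair (λ_q, ρ) with ρ(x) = x^{k-1} satisfies the belief-propagation density-evolution fixed-point equation of the LDPC-GM ensemble with inner (2,2) regular LDGM code on the BEC with erasure probability q, with equality for all x ∈ [0,1]. -/

import Mathlib

/-- `D_q(x) = 1 - (1-q)(1 - kx + (k-1)(1 - (1-x)^{k/(k-1)}))`. -/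
noncomputable def Dq (k : ℕ) (q x : ℝ) : ℝ :=
  1 - (1 - q) * (1 - k * x + ((k : ℝ) - 1) * (1 - (1 - x) ^ ((k : ℝ) / ((k : ℝ) - 1))))

/-- The check-regular variable degree distribution
`λ_q(x) = (1 - (1-x)^{1/(k-1)}) / D_q(x)²`. -/
noncomputable def lamq (k : ℕ) (q x : ℝ) : ℝ :=
  (1 - (1 - x) ^ (1 / ((k : ℝ) - 1))) / (Dq k q x) ^ 2

lemma kr_sub_pos {k : ℕ} (hk : 2 ≤ k) : (0:ℝ) < (k : ℝ) - 1 := by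
  have : (2:ℝ) ≤ (k:ℝ) := by exact_mod_cast hk
  linarith

lemma p_ge_one {k : ℕ} (hk : 2 ≤ k) : (1:ℝ) ≤ (k : ℝ) / ((k : ℝ) - 1) := by
  have h := kr_sub_pos hk
  rw [le_div_iff₀ h]; linarith

/-- `q ≤ Dq k q x` on `[0,1]`. -/
lemma Dq_ge {k : ℕ} (hk : 2 ≤ k) {q x : ℝ} (hq : q ∈ Set.Ioo (0:ℝ) 1)
    (hx : x ∈ Set.Icc (0:ℝ) 1) : q ≤ Dq k q x := by
  have hkr := kr_sub_pos hk
  have hp := p_ge_one hk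
  set p : ℝ := (k : ℝ) / ((k : ℝ) - 1) with hpdef
  -- Bernoulli: 1 + p * (-x) ≤ (1 - x) ^ p
  have hb : 1 + p * (-x) ≤ (1 - x) ^ p := by
    have := one_add_mul_self_le_rpow_one_add (s := -x) (by linarith [hx.2]) hp
    convert this using 2; ring
  have key : ((k:ℝ) - 1) * (1 - (1 - x) ^ p) ≤ (k:ℝ) * x := by
    have h1 : 1 - (1 - x) ^ p ≤ p * x := by nlinarith
    have h2 : ((k:ℝ) - 1) * (1 - (1 - x) ^ p) ≤ ((k:ℝ) - 1) * (p * x) := by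
      exact mul_le_mul_of_nonneg_left h1 (le_of_lt hkr)
    have h3 : ((k:ℝ) - 1) * p = (k:ℝ) := by
      rw [hpdef]; field_simp [hkr.ne']
    have h4 : ((k:ℝ) - 1) * (p * x) = (k:ℝ) * x := by rw [← mul_assoc, h3]
    linarith
  have : 1 - (k:ℝ) * x + ((k:ℝ) - 1) * (1 - (1 - x) ^ p) ≤ 1 := by linarith
  have hq1 : (0:ℝ) < 1 - q := by linarith [hq.2]
  unfold Dq
  nlinarith

lemma hasDerivAt_Dq {k : ℕ} (hk : 2 ≤ k) (q x : ℝ) :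
    HasDerivAt (Dq k q) ((1 - q) * k * (1 - (1 - x) ^ (1 / ((k : ℝ) - 1)))) x := by
  have hkr := kr_sub_pos hk
  have hp := p_ge_one hk
  set p : ℝ := (k : ℝ) / ((k : ℝ) - 1) with hpdef
  have h1 : HasDerivAt (fun y : ℝ => 1 - y) (-1 : ℝ) x := by
    simpa using (hasDerivAt_id x).const_sub 1
  have h2 : HasDerivAt (fun y : ℝ => (1 - y) ^ p) (p * (1 - x) ^ (p - 1) * (-1)) x :=
    (Real.hasDerivAt_rpow_const (Or.inr hp)).comp x h1
  have hD : HasDerivAt (fun y : ℝ =>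
      1 - (1 - q) * (1 - (k:ℝ) * y + ((k : ℝ) - 1) * (1 - (1 - y) ^ p)))
      (-( (1 - q) * (-(k:ℝ) + ((k:ℝ) - 1) * (-(p * (1 - x) ^ (p - 1) * (-1)))) )) x := by
    have hk' : HasDerivAt (fun y : ℝ => (k:ℝ) * y) ((k:ℝ)) x := by
      simpa using (hasDerivAt_id x).const_mul (k:ℝ)
    have hinner : HasDerivAt (fun y : ℝ => 1 - (k:ℝ) * y + ((k : ℝ) - 1) * (1 - (1 - y) ^ p))
        (-(k:ℝ) + ((k:ℝ) - 1) * (-(p * (1 - x) ^ (p - 1) * (-1)))) x := by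
      exact ((hk'.const_sub 1).add ((h2.const_sub 1).const_mul ((k:ℝ) - 1)))
    exact (hinner.const_mul (1 - q)).const_sub 1
  have hpm : p - 1 = 1 / ((k:ℝ) - 1) := by
    rw [hpdef, div_sub_one hkr.ne']; congr 1; ring
  have hval : -( (1 - q) * (-(k:ℝ) + ((k:ℝ) - 1) * (-(p * (1 - x) ^ (p - 1) * (-1)))) )
      = (1 - q) * k * (1 - (1 - x) ^ (1 / ((k : ℝ) - 1))) := by
    rw [hpm]
    have h3 : ((k:ℝ) - 1) * p = (k:ℝ) := by rw [hpdef]; field_simp [hkr.ne']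
    linear_combination (-(1 - q) * (1 - x) ^ (1 / ((k:ℝ) - 1))) * h3
  rw [hval] at hD
  exact hD

lemma integral_lamq {k : ℕ} (hk : 2 ≤ k) {q x : ℝ} (hq : q ∈ Set.Ioo (0:ℝ) 1)
    (hx : x ∈ Set.Icc (0:ℝ) 1) :
    ∫ t in (0:ℝ)..x, lamq k q t =
      ((1 - q) * k)⁻¹ * ((Dq k q 0)⁻¹ - (Dq k q x)⁻¹) := by
  have hq1 : (0:ℝ) < 1 - q := by linarith [hq.2]
  have hk0 : (0:ℝ) < (k:ℝ) := by positivity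
  have hc : (0:ℝ) < (1 - q) * k := by positivity
  have hkr := kr_sub_pos hk
  have huIcc : Set.uIcc (0:ℝ) x ⊆ Set.Icc (0:ℝ) 1 := by
    rw [Set.uIcc_of_le hx.1]
    exact Set.Icc_subset_Icc le_rfl hx.2
  have hDpos : ∀ t ∈ Set.uIcc (0:ℝ) x, (0:ℝ) < Dq k q t := fun t ht =>
    lt_of_lt_of_le hq.1 (Dq_ge hk hq (huIcc ht))
  -- antiderivative
  have hderiv : ∀ t ∈ Set.uIcc (0:ℝ) x,
      HasDerivAt (fun y => -(((1 - q) * k)⁻¹ * (Dq k q y)⁻¹)) (lamq k q t) t := by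
    intro t ht
    have hD := hasDerivAt_Dq hk q t
    have hne : Dq k q t ≠ 0 := (hDpos t ht).ne'
    have h1 := (hD.inv hne).const_mul (((1 - q) * k)⁻¹)
    have h2 := h1.neg
    refine HasDerivAt.congr_deriv h2 ?_
    unfold lamq
    field_simp
  have hcont : ContinuousOn (lamq k q) (Set.uIcc (0:ℝ) x) := by
    apply ContinuousOn.div
    · apply Continuous.continuousOn
      apply Continuous.sub continuous_const
      apply Continuous.rpow_const (by continuity)
      intro y; exact Or.inr (one_div_nonneg.mpr hkr.le)
    · apply Continuous.continuousOn
      apply Continuous.pow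
      unfold Dq
      apply Continuous.sub continuous_const
      apply Continuous.mul continuous_const
      apply Continuous.add
      · continuity
      · apply Continuous.mul continuous_const
        apply Continuous.sub continuous_const
        apply Continuous.rpow_const (by continuity)
        intro y; exact Or.inr (div_nonneg hk0.le hkr.le)
    · intro t ht
      exact pow_ne_zero 2 (hDpos t ht).ne'
  have := intervalIntegral.integral_eq_sub_of_hasDerivAt hderiv
    (hcont.intervalIntegrable)
  rw [this]
  ring

theorem stmt11 (k : ℕ) (hk : 2 ≤ k) (q : ℝ) (hq : q ∈ Set.Ioo (0 : ℝ) 1)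
    (x : ℝ) (hx : x ∈ Set.Icc (0 : ℝ) 1) :
    1 - (1 - (q / (1 - (1 - q) * (q * k * ∫ t in (0 : ℝ)..x, lamq k q t))) ^ 2 *
        lamq k q x) ^ (k - 1) = x := by
  have hq0 := hq.1
  have hq1 : (0:ℝ) < 1 - q := by linarith [hq.2]
  have hk0 : (0:ℝ) < (k:ℝ) := by positivity
  have hkr := kr_sub_pos hk
  have hD0 : Dq k q 0 = q := by
    unfold Dq
    rw [show (1:ℝ) - 0 = 1 by ring, Real.one_rpow]
    ring
  have hDx : q ≤ Dq k q x := Dq_ge hk hq hx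
  have hDpos : (0:ℝ) < Dq k q x := lt_of_lt_of_le hq0 hDx
  rw [integral_lamq hk hq hx, hD0]
  have hsimp : 1 - (1 - q) * (q * ↑k * (((1 - q) * ↑k)⁻¹ * (q⁻¹ - (Dq k q x)⁻¹)))
      = q / Dq k q x := by
    field_simp
    ring
  rw [hsimp]
  have h2 : q / (q / Dq k q x) = Dq k q x := by
    rw [div_div_eq_mul_div, mul_comm q (Dq k q x), mul_div_assoc, div_self hq0.ne', mul_one]
  rw [h2]
  have h3 : (Dq k q x) ^ 2 * lamq k q x = 1 - (1 - x) ^ (1 / ((k : ℝ) - 1)) := by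
    unfold lamq
    field_simp
  rw [h3]
  have h4 : 1 - (1 - (1 - x) ^ (1 / ((k : ℝ) - 1))) = (1 - x) ^ (1 / ((k : ℝ) - 1)) := by
    ring
  rw [h4]
  have h5 : ((1 - x) ^ (1 / ((k : ℝ) - 1))) ^ (k - 1) = 1 - x := by
    rw [← Real.rpow_natCast ((1 - x) ^ (1 / ((k : ℝ) - 1))) (k - 1),
      ← Real.rpow_mul (by linarith [hx.2])]
    have hcast : ((k - 1 : ℕ) : ℝ) = (k:ℝ) - 1 := by
      have : (1:ℕ) ≤ k := by omega
      push_cast [Nat.cast_sub this]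
      ring
    rw [hcast, one_div, inv_mul_cancel₀ hkr.ne', Real.rpow_one]
  rw [h5]
  ring
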